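/- Let p > 1 and let ρ(ζ) = exp(e^{2ζ}/4 − ((p+3)/(p−1))ζ), with weighted measure dμ = ρ(ζ)dζ on ℝ. If w : ℝ → ℝ is continuously differentiable with ∫_ℝ w(ζ)² dμ(ζ) < ∞ and ∫_ℝ w'(ζ)² dμ(ζ) < ∞, then ρ(ζ) · w(ζ)² → 0 as ζ → −∞; in particular, w(ζ) decays exponentially as ζ → −∞. -/

import Mathlib

open Real Set Filter MeasureTheory

/-- if `w ∈ H¹(ℝ, dμ)` with `ρ(ζ) = exp(e^{2ζ}/4 − ((p+3)/(p−1))ζ)`, then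
`ρ(ζ) w(ζ)² → 0` as `ζ → −∞` (exponential decay of `w` at `−∞`). -/
theorem stmt_12 (p : ℝ) (hp : 1 < p)
    (ρ : ℝ → ℝ)
    (hρ : ∀ ζ, ρ ζ = Real.exp (Real.exp (2 * ζ) / 4 - ((p + 3) / (p - 1)) * ζ))
    (w : ℝ → ℝ) (hw : ContDiff ℝ 1 w)
    (hw2 : Integrable (fun ζ => (w ζ) ^ 2 * ρ ζ))
    (hw2' : Integrable (fun ζ => (deriv w ζ) ^ 2 * ρ ζ)) :
    Tendsto (fun ζ => ρ ζ * (w ζ) ^ 2) atBot (nhds 0) := by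
  set c : ℝ := (p + 3) / (p - 1) with hc
  -- derivative of ρ
  have hρd : ∀ x : ℝ, HasDerivAt ρ (ρ x * (Real.exp (2 * x) / 2 - c)) x := by
    intro x
    have h1 : HasDerivAt (fun ζ : ℝ => Real.exp (2 * ζ) / 4 - c * ζ)
        (Real.exp (2 * x) / 2 - c) x := by
      have h2 : HasDerivAt (fun ζ : ℝ => 2 * ζ) 2 x := by
        simpa using (hasDerivAt_id x).const_mul 2
      have h3 := (h2.exp.div_const 4).sub ((hasDerivAt_id x).const_mul c)
      refine h3.congr_deriv ?_
      ring
    have heq : ρ = fun ζ => Real.exp (Real.exp (2 * ζ) / 4 - c * ζ) := funext hρ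
    rw [heq]
    simpa using h1.exp
  have hρpos : ∀ x, 0 < ρ x := fun x => by rw [hρ x]; exact Real.exp_pos _
  have hwd : ∀ x : ℝ, HasDerivAt w (deriv w x) x :=
    fun x => ((hw.differentiable one_ne_zero) x).hasDerivAt
  -- derivative of f = ρ * w^2
  set f' : ℝ → ℝ := fun x =>
    ρ x * (Real.exp (2 * x) / 2 - c) * w x ^ 2 + ρ x * (2 * w x * deriv w x) with hf'
  have hfd : ∀ x : ℝ, HasDerivAt (fun ζ => ρ ζ * w ζ ^ 2) (f' x) x := by
    intro x
    have hw2d : HasDerivAt (fun ζ => w ζ ^ 2) (2 * w x * deriv w x) x := by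
      simpa using (hwd x).fun_pow 2
    simpa [hf'] using (hρd x).fun_mul hw2d
  -- continuity facts
  have hρc : Continuous ρ := by
    have heq : ρ = fun ζ => Real.exp (Real.exp (2 * ζ) / 4 - c * ζ) := funext hρ
    rw [heq]; fun_prop
  have hwc : Continuous w := hw.continuous
  have hw'c : Continuous (deriv w) := hw.continuous_deriv le_rfl
  have hf'c : Continuous f' := by fun_prop
  -- integrability of f' on Iic 0
  have hbound : IntegrableOn f' (Iic (0 : ℝ)) := by
    have hg : Integrable (fun x => (1 / 2 + |c| + 1) * (w x ^ 2 * ρ x)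
        + (deriv w x) ^ 2 * ρ x) := (hw2.const_mul _).add hw2'
    refine Integrable.mono' hg.integrableOn hf'c.aestronglyMeasurable.restrict ?_
    rw [ae_restrict_iff' measurableSet_Iic]
    filter_upwards with x hx
    have hx0 : x ∈ Iic (0 : ℝ) := hx
    have he : Real.exp (2 * x) ≤ 1 := by
      rw [← Real.exp_zero]
      exact Real.exp_le_exp.2 (by linarith [mem_Iic.1 hx0])
    have hep : (0 : ℝ) < Real.exp (2 * x) := Real.exp_pos _
    have h1 : |Real.exp (2 * x) / 2 - c| ≤ 1 / 2 + |c| := by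
      have hca := neg_abs_le c
      have hcb := le_abs_self c
      rw [abs_le]
      constructor <;> linarith
    have hρx := (hρpos x).le
    have h2 : |2 * w x * deriv w x| ≤ w x ^ 2 + (deriv w x) ^ 2 := by
      rw [abs_mul, abs_mul, abs_two]
      nlinarith [sq_abs (w x), sq_abs (deriv w x), sq_nonneg (|w x| - |deriv w x|),
        abs_nonneg (w x), abs_nonneg (deriv w x)]
    calc ‖f' x‖ ≤ |ρ x * (Real.exp (2 * x) / 2 - c) * w x ^ 2|
          + |ρ x * (2 * w x * deriv w x)| := by
          rw [Real.norm_eq_abs]; exact abs_add_le _ _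
      _ ≤ ρ x * (1 / 2 + |c|) * w x ^ 2 + ρ x * (w x ^ 2 + (deriv w x) ^ 2) := by
          rw [abs_mul, abs_mul, abs_mul, abs_of_nonneg hρx,
            abs_of_nonneg (sq_nonneg (w x))]
          gcongr
      _ ≤ (1 / 2 + |c| + 1) * (w x ^ 2 * ρ x) + (deriv w x) ^ 2 * ρ x := le_of_eq (by ring)
  -- integrability of f on Iic 0
  have hfint : IntegrableOn (fun ζ => ρ ζ * w ζ ^ 2) (Iic (0 : ℝ)) := by
    have : (fun ζ => ρ ζ * w ζ ^ 2) = fun ζ => w ζ ^ 2 * ρ ζ := by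
      funext ζ; ring
    rw [this]
    exact hw2.integrableOn
  exact tendsto_zero_of_hasDerivAt_of_integrableOn_Iic
    (fun x _ => hfd x) hbound hfint
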